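/- arXiv:2002.06733 — 7 statements merged into one kernel-verified Lean document; each statement's English description precedes it below -/
import Mathlib

section
/- Define g(x) = (1+x)·log₂(1+x) − x·log₂(x) for x > 0. For fixed η ∈ (0,1) and n̄_B > 0, define C_χ(n̄_S) = g(η·n̄_S + (1−η)·n̄_B) − g((1−η)·n̄_B). Then for all n̄_S ≥ 0, C_χ(n̄_S) ≤ η·n̄_S·log₂(1 + 1/((1−η)·n̄_B)). -/
lemma keylog (a t : ℝ) (ha : 0 < a) (ht : 0 ≤ t) :
    ((1 + (a + t)) * Real.log (1 + (a + t)) - (a + t) * Real.log (a + t)) -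
      ((1 + a) * Real.log (1 + a) - a * Real.log a) ≤ t * Real.log (1 + 1 / a) := by
  set F : ℝ → ℝ := fun s =>
    s * Real.log (1 + 1 / a) -
      ((1 + (a + s)) * Real.log (1 + (a + s)) - (a + s) * Real.log (a + s)) with hF
  have hderiv : ∀ s : ℝ, 0 ≤ s → HasDerivAt F
      (Real.log (1 + 1 / a) - ((Real.log (1 + (a + s)) + 1) - (Real.log (a + s) + 1))) s := by
    intro s hs
    have h1 : HasDerivAt (fun x : ℝ => a + x) 1 s := (hasDerivAt_id s).const_add a
    have h2 : HasDerivAt (fun x : ℝ => 1 + (a + x)) 1 s := h1.const_add 1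
    have hA : HasDerivAt (fun x : ℝ => (a + x) * Real.log (a + x))
        (Real.log (a + s) + 1) s := by
      have := (Real.hasDerivAt_mul_log (x := a + s) (by positivity)).comp s h1
      simpa [Function.comp_def, mul_one] using this
    have hB : HasDerivAt (fun x : ℝ => (1 + (a + x)) * Real.log (1 + (a + x)))
        (Real.log (1 + (a + s)) + 1) s := by
      have := (Real.hasDerivAt_mul_log (x := 1 + (a + s)) (by positivity)).comp s h2
      simpa [Function.comp_def, mul_one] using this
    have hC : HasDerivAt (fun x : ℝ => x * Real.log (1 + 1 / a)) (Real.log (1 + 1 / a)) s :=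
      hasDerivAt_mul_const _
    exact hC.sub (hB.sub hA)
  have hmono : MonotoneOn F (Set.Ici 0) := by
    apply monotoneOn_of_deriv_nonneg (convex_Ici 0)
    · exact fun x hx => ((hderiv x hx).continuousAt).continuousWithinAt
    · intro x hx
      rw [interior_Ici] at hx
      exact ((hderiv x hx.le).differentiableAt).differentiableWithinAt
    · intro x hx
      rw [interior_Ici] at hx
      rw [(hderiv x hx.le).deriv]
      have hx' : 0 < x := hx
      have hax : 0 < a + x := by positivity
      have e1 : Real.log (1 + 1 / a) = Real.log (1 + a) - Real.log a := by
        rw [show (1:ℝ) + 1 / a = (1 + a) / a by field_simp; ring,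
          Real.log_div (by linarith : (0:ℝ) < 1 + a).ne' ha.ne']
      have e2 : Real.log (1 + (a + x)) + Real.log a ≤ Real.log (1 + a) + Real.log (a + x) := by
        rw [← Real.log_mul (by positivity) ha.ne', ← Real.log_mul (by positivity) hax.ne']
        apply Real.log_le_log (by positivity)
        nlinarith
      linarith
  have h0 : (0:ℝ) ∈ Set.Ici (0:ℝ) := Set.mem_Ici.mpr le_rfl
  have hm := hmono h0 (Set.mem_Ici.mpr ht) ht
  simp only [hF] at hm
  simp only [zero_mul, add_zero] at hm
  linarith

lemma keyb (a t : ℝ) (ha : 0 < a) (ht : 0 ≤ t) :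
    ((1 + (a + t)) * Real.logb 2 (1 + (a + t)) - (a + t) * Real.logb 2 (a + t)) -
      ((1 + a) * Real.logb 2 (1 + a) - a * Real.logb 2 a) ≤ t * Real.logb 2 (1 + 1 / a) := by
  have hl2 : 0 < Real.log 2 := Real.log_pos one_lt_two
  have h := keylog a t ha ht
  have h2 : (((1 + (a + t)) * Real.log (1 + (a + t)) - (a + t) * Real.log (a + t)) -
      ((1 + a) * Real.log (1 + a) - a * Real.log a)) / Real.log 2
      ≤ (t * Real.log (1 + 1 / a)) / Real.log 2 := by
    gcongr
  calc ((1 + (a + t)) * Real.logb 2 (1 + (a + t)) - (a + t) * Real.logb 2 (a + t)) -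
      ((1 + a) * Real.logb 2 (1 + a) - a * Real.logb 2 a)
      = (((1 + (a + t)) * Real.log (1 + (a + t)) - (a + t) * Real.log (a + t)) -
        ((1 + a) * Real.log (1 + a) - a * Real.log a)) / Real.log 2 := by
        simp only [Real.logb]; ring
    _ ≤ (t * Real.log (1 + 1 / a)) / Real.log 2 := h2
    _ = t * Real.logb 2 (1 + 1 / a) := by simp only [Real.logb]; ring

theorem stmt_2 (η nB : ℝ) (hη : η ∈ Set.Ioo (0:ℝ) 1) (hnB : 0 < nB)
    (g : ℝ → ℝ) (hg : ∀ x, g x = (1 + x) * Real.logb 2 (1 + x) - x * Real.logb 2 x)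
    (nS : ℝ) (hnS : 0 ≤ nS) :
    g (η * nS + (1 - η) * nB) - g ((1 - η) * nB) ≤
      η * nS * Real.logb 2 (1 + 1 / ((1 - η) * nB)) := by
  obtain ⟨hη0, hη1⟩ := hη
  have ha : 0 < (1 - η) * nB := mul_pos (by linarith) hnB
  have ht : 0 ≤ η * nS := by positivity
  have hk := keyb ((1 - η) * nB) (η * nS) ha ht
  rw [add_comm ((1 - η) * nB) (η * nS)] at hk
  rw [hg, hg]
  linarith
end

section
/- Fix η ∈ (0,1), n̄_B > 0, δ > 0 and let c_cov = √(2·η·n̄_B·(1+η·n̄_B))/(1−η). Define the entanglement-assisted capacity C_EA(n̄_S) = g(n̄_S) + g(η·n̄_S + (1−η)·n̄_B) − g(A₊) − g(A₋), where g(x) = (1+x)·log₂(1+x) − x·log₂ x (g(0)=0), A_± = (B − 1 ± (1−η)(n̄_B − n̄_S))/2, and B = √((n̄_S + 1 + η·n̄_S + (1−η)·n̄_B)² − 4·η·n̄_S·(n̄_S+1)). Then lim_{n→∞} n·C_EA(√δ·c_cov/√n) / (√n·log₂ n) = √δ·c_cov·η/(2·(1 + (1−η)·n̄_B)). -/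
open Filter Set

noncomputable def Qf (η nB s : ℝ) : ℝ :=
  (s + 1 + η * s + (1 - η) * nB) ^ 2 - 4 * η * s * (s + 1)
noncomputable def Bf (η nB s : ℝ) : ℝ := Real.sqrt (Qf η nB s)
noncomputable def af (η nB s : ℝ) : ℝ := (Bf η nB s - 1 - (1 - η) * (nB - s)) / 2
noncomputable def pf (η nB s : ℝ) : ℝ := (Bf η nB s - 1 + (1 - η) * (nB - s)) / 2
noncomputable def gf (x : ℝ) : ℝ := (1 + x) * Real.logb 2 (1 + x) - x * Real.logb 2 x
noncomputable def phi (x : ℝ) : ℝ := (1 + x) * Real.logb 2 (1 + x)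
noncomputable def Nf (η nB s : ℝ) : ℝ :=
  phi s + gf (η * s + (1 - η) * nB) - gf (pf η nB s) - phi (af η nB s)
noncomputable def Cf (η nB s : ℝ) : ℝ :=
  gf s + gf (η * s + (1 - η) * nB) - gf (pf η nB s) - gf (af η nB s)

lemma Cf_eq (η nB s : ℝ) :
    Cf η nB s = Nf η nB s + s * Real.logb 2 (1 / s)
      - af η nB s * Real.logb 2 (1 / af η nB s) := by
  unfold Cf Nf gf phi
  rw [one_div, one_div, Real.logb_inv, Real.logb_inv]
  ring

section deriv
variable {η nB : ℝ}

lemma Qf_hasDeriv (η nB : ℝ) :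
    HasDerivAt (Qf η nB) (2 * (1 + (1 - η) * nB) * (1 + η) - 4 * η) 0 := by
  have h1 : HasDerivAt (fun s : ℝ => s + 1 + η * s + (1 - η) * nB) (1 + η) 0 := by
    simpa using (((hasDerivAt_id (0:ℝ)).add_const (1:ℝ)).add
      ((hasDerivAt_id (0:ℝ)).const_mul η)).add_const ((1 - η) * nB)
  have h3 : HasDerivAt (fun s : ℝ => 4 * η * s * (s + 1)) (4 * η) 0 := by
    simpa [Pi.mul_def] using ((hasDerivAt_id (0:ℝ)).const_mul (4 * η)).mul
      ((hasDerivAt_id (0:ℝ)).add_const (1:ℝ))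
  have h4 := (h1.pow 2).sub h3
  unfold Qf
  refine h4.congr_deriv ?_
  push_cast
  ring

lemma Qf_zero (η nB : ℝ) : Qf η nB 0 = (1 + (1 - η) * nB) ^ 2 := by unfold Qf; ring

lemma Bf_zero (hb0 : (0:ℝ) < 1 + (1 - η) * nB) : Bf η nB 0 = 1 + (1 - η) * nB := by
  unfold Bf
  rw [Qf_zero]
  exact Real.sqrt_sq hb0.le

lemma af_zero (hb0 : (0:ℝ) < 1 + (1 - η) * nB) : af η nB 0 = 0 := by
  unfold af
  rw [Bf_zero hb0]
  ring

lemma pf_zero (hb0 : (0:ℝ) < 1 + (1 - η) * nB) : pf η nB 0 = (1 - η) * nB := by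
  unfold pf
  rw [Bf_zero hb0]
  ring

lemma Bf_hasDeriv (hb0 : (0:ℝ) < 1 + (1 - η) * nB) :
    HasDerivAt (Bf η nB)
      ((2 * (1 + (1 - η) * nB) * (1 + η) - 4 * η) / (2 * (1 + (1 - η) * nB))) 0 := by
  have hQne : Qf η nB 0 ≠ 0 := by rw [Qf_zero]; positivity
  have h := (Qf_hasDeriv η nB).sqrt hQne
  have hs : Real.sqrt (Qf η nB 0) = 1 + (1 - η) * nB := by
    rw [Qf_zero]; exact Real.sqrt_sq hb0.le
  rw [hs] at h
  exact h

lemma af_hasDeriv (hb0 : (0:ℝ) < 1 + (1 - η) * nB) :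
    HasDerivAt (af η nB) (1 - η / (1 + (1 - η) * nB)) 0 := by
  have h2 := (((Bf_hasDeriv hb0).sub_const 1).sub
    (((hasDerivAt_id (0:ℝ)).const_sub nB).const_mul (1 - η))).div_const 2
  show HasDerivAt (fun s : ℝ => (Bf η nB s - 1 - (1 - η) * (nB - s)) / 2) _ 0
  refine h2.congr_deriv ?_
  field_simp
  ring

lemma pf_hasDeriv (hb0 : (0:ℝ) < 1 + (1 - η) * nB) : ∃ d, HasDerivAt (pf η nB) d 0 := by
  exact ⟨_, (((Bf_hasDeriv hb0).sub_const 1).add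
    (((hasDerivAt_id (0:ℝ)).const_sub nB).const_mul (1 - η))).div_const 2⟩

lemma gf_hasDeriv (x : ℝ) (hx : 0 < x) : ∃ d, HasDerivAt gf d x := by
  have h1 : HasDerivAt (fun y : ℝ => 1 + y) 1 x := by
    simpa using (hasDerivAt_id x).const_add (1:ℝ)
  have hlog1 : HasDerivAt (fun y : ℝ => Real.log (1 + y)) (1 / (1 + x)) x :=
    h1.log (by positivity)
  have hlog2 : HasDerivAt Real.log x⁻¹ x := Real.hasDerivAt_log hx.ne'
  exact ⟨_, (h1.mul (hlog1.div_const (Real.log 2))).sub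
    ((hasDerivAt_id x).mul (hlog2.div_const (Real.log 2)))⟩

lemma phi_hasDeriv (x : ℝ) (hx : (1:ℝ) + x ≠ 0) : ∃ d, HasDerivAt phi d x := by
  have h1 : HasDerivAt (fun y : ℝ => 1 + y) 1 x := by
    simpa using (hasDerivAt_id x).const_add (1:ℝ)
  have hlog1 : HasDerivAt (fun y : ℝ => Real.log (1 + y)) (1 / (1 + x)) x := h1.log hx
  exact ⟨_, h1.mul (hlog1.div_const (Real.log 2))⟩

lemma comp' {g f : ℝ → ℝ} {d f' x y : ℝ} (hg : HasDerivAt g d y) (hf : HasDerivAt f f' x)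
    (he : f x = y) : HasDerivAt (fun s => g (f s)) (d * f') x := by
  subst he; exact hg.comp x hf

lemma Nf_hasDeriv (hη0 : 0 < η) (hη1 : η < 1) (hnB : 0 < nB) :
    ∃ d, HasDerivAt (Nf η nB) d 0 := by
  have hb0 : (0:ℝ) < 1 + (1 - η) * nB := by nlinarith
  have hp0 : (0:ℝ) < (1 - η) * nB := by nlinarith
  obtain ⟨d1, h1⟩ := phi_hasDeriv  0 (by norm_num)
  obtain ⟨d2, hg2⟩ := gf_hasDeriv ((1 - η) * nB) hp0
  obtain ⟨dp, hp⟩ := pf_hasDeriv hb0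
  have hm : HasDerivAt (fun s : ℝ => η * s + (1 - η) * nB) η 0 := by
    simpa using ((hasDerivAt_id (0:ℝ)).const_mul η).add_const ((1 - η) * nB)
  have h2 := comp' hg2 hm (show η * 0 + (1 - η) * nB = (1 - η) * nB by ring)
  have h3 := comp' hg2 hp (pf_zero hb0)
  have h4 := comp' h1 (af_hasDeriv hb0) (af_zero hb0)
  exact ⟨_, ((h1.add h2).sub h3).sub h4⟩

lemma Nf_zero (hη0 : 0 < η) (hη1 : η < 1) (hnB : 0 < nB) : Nf η nB 0 = 0 := by
  have hb0 : (0:ℝ) < 1 + (1 - η) * nB := by nlinarith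
  unfold Nf
  rw [pf_zero hb0, af_zero hb0]
  simp [phi]

end deriv

lemma core (η nB : ℝ) (hη0 : 0 < η) (hη1 : η < 1) (hnB : 0 < nB) :
    Tendsto (fun s => Cf η nB s / (s * Real.logb 2 (1 / s))) (nhdsWithin 0 (Set.Ioi 0))
      (nhds (η / (1 + (1 - η) * nB))) := by
  have hb0 : (0:ℝ) < 1 + (1 - η) * nB := by nlinarith
  set κ : ℝ := 1 - η / (1 + (1 - η) * nB) with hκdef
  have hκpos : 0 < κ := by
    have : η / (1 + (1 - η) * nB) < 1 := by
      rw [div_lt_one hb0]; nlinarith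
    simp only [hκdef]; linarith
  have hmono : nhdsWithin (0:ℝ) (Set.Ioi 0) ≤ nhdsWithin 0 {(0:ℝ)}ᶜ :=
    nhdsWithin_mono 0 (fun x hx => ne_of_gt hx)
  -- slope limits
  have ha_slope : Tendsto (fun s => af η nB s / s) (nhdsWithin 0 (Set.Ioi 0)) (nhds κ) := by
    have h := (hasDerivAt_iff_tendsto_slope.mp (af_hasDeriv hb0)).mono_left hmono
    refine h.congr fun s => ?_
    rw [slope_def_field, af_zero hb0, sub_zero, sub_zero]
  obtain ⟨dN, hNd⟩ := Nf_hasDeriv hη0 hη1 hnB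
  have hN_slope : Tendsto (fun s => Nf η nB s / s) (nhdsWithin 0 (Set.Ioi 0)) (nhds dN) := by
    have h := (hasDerivAt_iff_tendsto_slope.mp hNd).mono_left hmono
    refine h.congr fun s => ?_
    rw [slope_def_field, Nf_zero hη0 hη1 hnB, sub_zero, sub_zero]
  -- logb (1/s) tends to atTop
  have hL : Tendsto (fun s : ℝ => Real.logb 2 (1 / s)) (nhdsWithin 0 (Set.Ioi 0)) atTop := by
    have := (Real.tendsto_logb_atTop (by norm_num : (1:ℝ) < 2)).comp tendsto_inv_nhdsGT_zero
    refine this.congr fun s => ?_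
    simp [Function.comp, one_div]
  -- P1
  have P1 : Tendsto (fun s => Nf η nB s / (s * Real.logb 2 (1 / s)))
      (nhdsWithin 0 (Set.Ioi 0)) (nhds 0) := by
    have h := hN_slope.mul hL.inv_tendsto_atTop
    rw [mul_zero] at h
    refine h.congr fun s => ?_
    simp only [Pi.inv_apply]
    rw [← div_eq_mul_inv, div_div]
  -- eventual facts
  have ev2 : ∀ᶠ s in nhdsWithin (0:ℝ) (Set.Ioi 0), 0 < s := eventually_mem_nhdsWithin
  have ev3 : ∀ᶠ s in nhdsWithin (0:ℝ) (Set.Ioi 0), s < 1 :=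
    eventually_nhdsWithin_of_eventually_nhds (eventually_lt_nhds zero_lt_one)
  have ev1 : ∀ᶠ s in nhdsWithin (0:ℝ) (Set.Ioi 0), 0 < af η nB s / s :=
    ha_slope.eventually (eventually_gt_nhds hκpos)
  -- log ratio tends to 1
  have hlog_ratio : Tendsto (fun s => Real.log (af η nB s) / Real.log s)
      (nhdsWithin 0 (Set.Ioi 0)) (nhds 1) := by
    have h1 : Tendsto (fun s => Real.log (af η nB s / s)) (nhdsWithin 0 (Set.Ioi 0))
        (nhds (Real.log κ)) := ((Real.continuousAt_log hκpos.ne').tendsto.comp ha_slope)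
    have h2 : Tendsto (fun s : ℝ => -Real.log s) (nhdsWithin 0 (Set.Ioi 0)) atTop :=
      tendsto_neg_atBot_atTop.comp (Real.tendsto_log_nhdsGT_zero)
    have h3 := h1.div_atTop h2
    have h6 : Tendsto (fun s => Real.log (af η nB s / s) / Real.log s)
        (nhdsWithin 0 (Set.Ioi 0)) (nhds 0) := by
      have h5 := h3.neg
      rw [neg_zero] at h5
      refine h5.congr fun s => ?_
      rw [div_neg, neg_neg]
    have h7 : Tendsto (fun s => 1 + Real.log (af η nB s / s) / Real.log s)
        (nhdsWithin 0 (Set.Ioi 0)) (nhds (1 + 0)) := tendsto_const_nhds.add h6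
    rw [add_zero] at h7
    refine h7.congr' ?_
    filter_upwards [ev1, ev2, ev3] with s h1' h2' h3'
    have haf : 0 < af η nB s := by
      have := mul_pos h1' h2'
      rwa [div_mul_cancel₀ _ h2'.ne'] at this
    have hls : Real.log s ≠ 0 := (Real.log_neg h2' h3').ne
    rw [Real.log_div haf.ne' h2'.ne']
    field_simp
    ring
  -- P2
  have P2 : Tendsto (fun s => af η nB s * Real.logb 2 (1 / af η nB s)
      / (s * Real.logb 2 (1 / s))) (nhdsWithin 0 (Set.Ioi 0)) (nhds κ) := by
    have h := ha_slope.mul hlog_ratio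
    rw [mul_one] at h
    refine h.congr' ?_
    filter_upwards [ev2, ev3] with s h2' h3'
    have hls : Real.log s ≠ 0 := (Real.log_neg h2' h3').ne
    have hl2 : Real.log 2 ≠ 0 := by
      have := Real.log_pos (by norm_num : (1:ℝ) < 2); linarith
    rw [one_div, one_div, Real.logb_inv, Real.logb_inv]
    simp only [Real.logb]
    field_simp
  -- assemble
  have hP1' : Tendsto (fun s => Nf η nB s / (s * Real.logb 2 (1 / s)) + 1)
      (nhdsWithin 0 (Set.Ioi 0)) (nhds (0 + 1)) := P1.add tendsto_const_nhds
  have hmain := hP1'.sub P2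
  have hval : (0:ℝ) + 1 - κ = η / (1 + (1 - η) * nB) := by rw [hκdef]; ring
  rw [hval] at hmain
  refine hmain.congr' ?_
  filter_upwards [ev2, ev3] with s h2' h3'
  have hL1 : 1 < 1 / s := by rw [lt_div_iff₀ h2']; linarith
  have hsL : s * Real.logb 2 (1 / s) ≠ 0 :=
    (mul_pos h2' (Real.logb_pos (by norm_num) hL1)).ne'
  rw [Cf_eq, sub_div, add_div, div_self hsL]

theorem stmt_5 (η nB δ : ℝ) (hη : η ∈ Set.Ioo (0:ℝ) 1) (hnB : 0 < nB) (hδ : 0 < δ)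
    (ccov : ℝ) (hccov : ccov = Real.sqrt (2 * η * nB * (1 + η * nB)) / (1 - η))
    (g : ℝ → ℝ) (hg : ∀ x, g x = (1 + x) * Real.logb 2 (1 + x) - x * Real.logb 2 x)
    (B Ap Am CEA : ℝ → ℝ)
    (hB : ∀ nS, B nS = Real.sqrt ((nS + 1 + η * nS + (1 - η) * nB) ^ 2 - 4 * η * nS * (nS + 1)))
    (hAp : ∀ nS, Ap nS = (B nS - 1 + (1 - η) * (nB - nS)) / 2)
    (hAm : ∀ nS, Am nS = (B nS - 1 - (1 - η) * (nB - nS)) / 2)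
    (hCEA : ∀ nS, CEA nS = g nS + g (η * nS + (1 - η) * nB) - g (Ap nS) - g (Am nS)) :
    Filter.Tendsto
      (fun n : ℕ => (n : ℝ) * CEA (Real.sqrt δ * ccov / Real.sqrt n) /
        (Real.sqrt n * Real.logb 2 n))
      Filter.atTop
      (nhds (Real.sqrt δ * ccov * η / (2 * (1 + (1 - η) * nB)))) := by
  obtain ⟨hη0, hη1⟩ := hη
  have h1η : (0:ℝ) < 1 - η := by linarith
  have hb0 : (0:ℝ) < 1 + (1 - η) * nB := by nlinarith
  have hCf : ∀ s, CEA s = Cf η nB s := by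
    intro s
    simp only [hCEA, hg, hAp, hAm, hB, Cf, gf, pf, af, Bf, Qf]
  have hccov0 : 0 < ccov := by
    rw [hccov]
    have hA : 0 < 2 * η * nB * (1 + η * nB) := by nlinarith [mul_pos hη0 hnB]
    exact div_pos (Real.sqrt_pos.mpr hA) h1η
  set c : ℝ := Real.sqrt δ * ccov with hcdef
  have hc : 0 < c := mul_pos (Real.sqrt_pos.mpr hδ) hccov0
  -- sqrt n tends to atTop
  have hs1 : Tendsto Real.sqrt atTop atTop := by
    refine (tendsto_rpow_atTop (by norm_num : (0:ℝ) < 1/2)).congr' ?_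
    filter_upwards [eventually_ge_atTop (0:ℝ)] with x _
    rw [Real.sqrt_eq_rpow]
  have hsqrtn : Tendsto (fun n : ℕ => Real.sqrt n) atTop atTop :=
    hs1.comp tendsto_natCast_atTop_atTop
  have hsn0 : Tendsto (fun n : ℕ => c / Real.sqrt n) atTop (nhds 0) :=
    Tendsto.const_div_atTop hsqrtn c
  have hsn : Tendsto (fun n : ℕ => c / Real.sqrt n) atTop (nhdsWithin 0 (Set.Ioi 0)) := by
    rw [tendsto_nhdsWithin_iff]
    refine ⟨hsn0, ?_⟩
    filter_upwards [eventually_ge_atTop 1] with n hn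
    have : (0:ℝ) < n := by exact_mod_cast Nat.lt_of_lt_of_le Nat.zero_lt_one hn
    exact Set.mem_Ioi.mpr (div_pos hc (Real.sqrt_pos.mpr this))
  have T1 := (core η nB hη0 hη1 hnB).comp hsn
  -- T2
  have hLinf : Tendsto (fun n : ℕ => Real.logb 2 n) atTop atTop :=
    (Real.tendsto_logb_atTop (by norm_num : (1:ℝ) < 2)).comp tendsto_natCast_atTop_atTop
  have T2 : Tendsto (fun n : ℕ => c * Real.logb 2 (1 / (c / Real.sqrt n)) / Real.logb 2 n)
      atTop (nhds (c / 2)) := by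
    have base : Tendsto (fun n : ℕ => c / 2 - c * Real.logb 2 c * (Real.logb 2 n)⁻¹)
        atTop (nhds (c / 2 - c * Real.logb 2 c * 0)) :=
      tendsto_const_nhds.sub (tendsto_const_nhds.mul hLinf.inv_tendsto_atTop)
    rw [mul_zero, sub_zero] at base
    refine base.congr' ?_
    filter_upwards [eventually_ge_atTop 2] with n hn
    have hn2 : (2:ℝ) ≤ (n:ℝ) := by exact_mod_cast hn
    have hnpos : (0:ℝ) < n := by linarith
    have hLpos : 0 < Real.logb 2 n :=
      Real.logb_pos (by norm_num) (by linarith)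
    have hrt : (0:ℝ) < Real.sqrt n := Real.sqrt_pos.mpr hnpos
    have h1 : 1 / (c / Real.sqrt n) = Real.sqrt n / c := one_div_div c (Real.sqrt n)
    have h2 : Real.logb 2 (Real.sqrt n / c) = Real.logb 2 (Real.sqrt n) - Real.logb 2 c :=
      Real.logb_div hrt.ne' hc.ne'
    have h3 : Real.logb 2 (Real.sqrt n) = Real.logb 2 n / 2 := by
      rw [Real.logb, Real.logb, Real.log_sqrt hnpos.le]; ring
    rw [h1, h2, h3]
    field_simp
  have hmain := T1.mul T2
  have hval : η / (1 + (1 - η) * nB) * (c / 2) = Real.sqrt δ * ccov * η / (2 * (1 + (1 - η) * nB)) := by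
    rw [hcdef]; field_simp
  rw [hval] at hmain
  refine hmain.congr' ?_
  have evlt : ∀ᶠ n : ℕ in atTop, c / Real.sqrt n < 1 :=
    hsn0.eventually (eventually_lt_nhds zero_lt_one)
  filter_upwards [eventually_ge_atTop 2, evlt] with n hn hlt
  have hn2 : (2:ℝ) ≤ (n:ℝ) := by exact_mod_cast hn
  have hnpos : (0:ℝ) < n := by linarith
  have hrt : (0:ℝ) < Real.sqrt n := Real.sqrt_pos.mpr hnpos
  have hs : 0 < c / Real.sqrt n := div_pos hc hrt
  have hL1 : 1 < 1 / (c / Real.sqrt n) := by rw [lt_div_iff₀ hs]; linarith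
  have hlpos : 0 < Real.logb 2 (1 / (c / Real.sqrt n)) := Real.logb_pos (by norm_num) hL1
  have hLpos : 0 < Real.logb 2 n := Real.logb_pos (by norm_num) (by linarith)
  have hnn : (n:ℝ) = Real.sqrt n * Real.sqrt n := (Real.mul_self_sqrt hnpos.le).symm
  simp only [Function.comp]
  rw [hCf]
  set r := Real.sqrt n with hr
  set s := c / r with hsdef
  set l := Real.logb 2 (1 / s) with hldef
  set L := Real.logb 2 (n:ℝ) with hLdef
  have step : (↑n : ℝ) * Cf η nB s / (r * L) = r * Cf η nB s / L := by
    rw [div_eq_div_iff (mul_pos hrt hLpos).ne' hLpos.ne']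
    linear_combination Cf η nB s * L * hnn
  rw [step, hsdef]
  field_simp
end

section
/- Define C_EA(n̄_S) as the entanglement-assisted capacity of the bosonic channel (as in the previous context, with fixed η ∈ (0,1), n̄_B > 0). Then as n̄_S → 0⁺, C_EA(n̄_S) = −η·n̄_S·log₂(n̄_S)/(1 + (1−η)·n̄_B) + O(n̄_S), i.e., lim_{n̄_S→0⁺} C_EA(n̄_S)/(−n̄_S·log₂ n̄_S) = η/(1 + (1−η)·n̄_B). -/
open Real Filter Set

lemma xlogb_diff {x : ℝ} (hx : x ≠ 0) :
    DifferentiableAt ℝ (fun t : ℝ => t * Real.logb 2 t) x := by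
  have h := (Real.differentiableAt_log hx)
  simpa [Real.logb, div_eq_mul_inv] using (differentiableAt_fun_id.fun_mul (h.div_const (Real.log 2)))

lemma logb_inv_tendsto : Filter.Tendsto (fun x : ℝ => (Real.logb 2 x)⁻¹)
    (nhdsWithin 0 (Set.Ioi 0)) (nhds 0) := by
  have h : Tendsto (fun x : ℝ => Real.logb 2 x) (nhdsWithin 0 (Set.Ioi 0)) atBot := by
    have h2 : (0:ℝ) < Real.log 2 := Real.log_pos one_lt_two
    simpa [Real.logb, div_eq_mul_inv] using Real.tendsto_log_nhdsGT_zero.atBot_div_const h2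
  have hpos : Tendsto (fun x : ℝ => -(Real.logb 2 x)) (nhdsWithin 0 (Set.Ioi 0)) atTop :=
    tendsto_neg_atBot_atTop.comp h
  simpa [inv_neg] using hpos.inv_tendsto_atTop.neg

set_option maxHeartbeats 1000000 in
theorem stmt_6 (η nB : ℝ) (hη : η ∈ Set.Ioo (0:ℝ) 1) (hnB : 0 < nB)
    (g : ℝ → ℝ) (hg : ∀ x, g x = (1 + x) * Real.logb 2 (1 + x) - x * Real.logb 2 x)
    (B Ap Am CEA : ℝ → ℝ)
    (hB : ∀ nS, B nS = Real.sqrt ((nS + 1 + η * nS + (1 - η) * nB) ^ 2 - 4 * η * nS * (nS + 1)))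
    (hAp : ∀ nS, Ap nS = (B nS - 1 + (1 - η) * (nB - nS)) / 2)
    (hAm : ∀ nS, Am nS = (B nS - 1 - (1 - η) * (nB - nS)) / 2)
    (hCEA : ∀ nS, CEA nS = g nS + g (η * nS + (1 - η) * nB) - g (Ap nS) - g (Am nS)) :
    Filter.Tendsto (fun nS : ℝ => CEA nS / (-(nS * Real.logb 2 nS)))
      (nhdsWithin 0 (Set.Ioi 0)) (nhds (η / (1 + (1 - η) * nB))) := by
  obtain ⟨hη0, hη1⟩ := hη
  obtain ⟨b, hbdef⟩ : ∃ b : ℝ, b = 1 + (1 - η) * nB := ⟨_, rfl⟩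
  have hb1 : 1 < b := by rw [hbdef]; nlinarith
  have hb0 : (0:ℝ) < b := by linarith
  obtain ⟨c, hcdef⟩ : ∃ c : ℝ, c = 1 - η / b := ⟨_, rfl⟩
  have hc0 : (0:ℝ) < c := by
    have h1 : η / b < 1 := (div_lt_one hb0).2 (by nlinarith)
    rw [hcdef]; linarith
  -- Q facts
  have hQeq : ∀ nS : ℝ, (nS + 1 + η * nS + (1 - η) * nB) ^ 2 - 4 * η * nS * (nS + 1)
      = b ^ 2 + (2 * b * (1 + η) - 4 * η) * nS + (1 - η) ^ 2 * nS ^ 2 := by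
    intro nS; rw [hbdef]; ring
  have hP0 : (0:ℝ) < 2 * b * (1 + η) - 4 * η := by nlinarith
  have hQpos : ∀ nS : ℝ, 0 ≤ nS →
      0 < (nS + 1 + η * nS + (1 - η) * nB) ^ 2 - 4 * η * nS * (nS + 1) := by
    intro nS hnS; rw [hQeq]; nlinarith
  have hBnonneg : ∀ nS : ℝ, 0 ≤ B nS := by intro nS; rw [hB]; exact Real.sqrt_nonneg _
  have hBsq : ∀ nS : ℝ, 0 ≤ nS → B nS ^ 2
      = b ^ 2 + (2 * b * (1 + η) - 4 * η) * nS + (1 - η) ^ 2 * nS ^ 2 := by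
    intro nS hnS
    rw [hB, Real.sq_sqrt (hQpos nS hnS).le, hQeq]
  have hB0 : B 0 = b := by
    rw [hB]
    rw [show (0 + 1 + η * 0 + (1 - η) * nB) ^ 2 - 4 * η * 0 * (0 + 1) = b ^ 2 by rw [hbdef]; ring]
    exact Real.sqrt_sq hb0.le
  have hBfun : B = fun nS => Real.sqrt ((nS + 1 + η * nS + (1 - η) * nB) ^ 2 - 4 * η * nS * (nS + 1)) :=
    funext hB
  have hBt : Tendsto B (nhdsWithin 0 (Set.Ioi 0)) (nhds b) := by
    have hcont : ContinuousAt B 0 := by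
      rw [hBfun]
      exact (Real.continuous_sqrt.comp (by continuity)).continuousAt
    have h2 : Tendsto B (nhdsWithin 0 (Set.Ioi 0)) (nhds (B 0)) :=
      hcont.tendsto.mono_left nhdsWithin_le_nhds
    rwa [hB0] at h2
  -- (A) Am nS / nS → c
  have hAmdiv : Tendsto (fun nS => Am nS / nS) (nhdsWithin 0 (Set.Ioi 0)) (nhds c) := by
    have heq : ∀ᶠ nS in nhdsWithin 0 (Set.Ioi 0),
        ((2 * b * (1 + η) - 4 * η + (1 - η) ^ 2 * nS) / (B nS + b) + (1 - η)) / 2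
          = Am nS / nS := by
      filter_upwards [self_mem_nhdsWithin] with nS (hnS : 0 < nS)
      have hBb : 0 < B nS + b := by have := hBnonneg nS; linarith
      have h1 : (B nS - b) * (B nS + b)
          = nS * (2 * b * (1 + η) - 4 * η + (1 - η) ^ 2 * nS) := by
        linear_combination hBsq nS hnS.le
      rw [hAm, show (B nS - 1 - (1 - η) * (nB - nS)) / 2 = (B nS - b + (1 - η) * nS) / 2 by
        rw [hbdef]; ring]
      field_simp
      linear_combination (-1:ℝ) * h1
    have hlim : Tendsto (fun nS : ℝ =>
        ((2 * b * (1 + η) - 4 * η + (1 - η) ^ 2 * nS) / (B nS + b) + (1 - η)) / 2)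
        (nhdsWithin 0 (Set.Ioi 0)) (nhds c) := by
      have hnum : Tendsto (fun nS : ℝ => 2 * b * (1 + η) - 4 * η + (1 - η) ^ 2 * nS)
          (nhdsWithin 0 (Set.Ioi 0)) (nhds (2 * b * (1 + η) - 4 * η)) := by
        have : ContinuousAt (fun nS : ℝ => 2 * b * (1 + η) - 4 * η + (1 - η) ^ 2 * nS) 0 := by
          fun_prop
        simpa using this.tendsto.mono_left nhdsWithin_le_nhds
      have hden : Tendsto (fun nS : ℝ => B nS + b) (nhdsWithin 0 (Set.Ioi 0)) (nhds (b + b)) :=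
        hBt.add tendsto_const_nhds
      have h2b : b + b ≠ 0 := by positivity
      have := ((hnum.div hden h2b).add (tendsto_const_nhds (x := (1 - η)))).div_const 2
      convert this using 2
      · rfl
      rw [hcdef]
      field_simp
      ring
    exact hlim.congr' heq
  have hmB : (0:ℝ) < (1 - η) * nB := mul_pos (by linarith) hnB
  -- eventually Am/nS > c/2
  have hev : ∀ᶠ nS in nhdsWithin 0 (Set.Ioi 0), c / 2 < Am nS / nS :=
    hAmdiv.eventually (eventually_gt_nhds (by linarith : c / 2 < c))
  -- (B)  Am*logb Am / (nS*logb nS) → c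
  have hT3 : Tendsto (fun nS => Am nS * Real.logb 2 (Am nS) / (nS * Real.logb 2 nS))
      (nhdsWithin 0 (Set.Ioi 0)) (nhds c) := by
    have heq2 : ∀ᶠ nS in nhdsWithin 0 (Set.Ioi 0),
        (Am nS / nS) * (1 + Real.logb 2 (Am nS / nS) * (Real.logb 2 nS)⁻¹)
          = Am nS * Real.logb 2 (Am nS) / (nS * Real.logb 2 nS) := by
      filter_upwards [self_mem_nhdsWithin, hev,
        Ioo_mem_nhdsGT_of_mem (by norm_num : (0:ℝ) ∈ Set.Ico (0:ℝ) 1)] with nS h1 h2 h3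
      have hnS : (0:ℝ) < nS := h1
      have hq : (0:ℝ) < Am nS / nS := lt_trans (by linarith : (0:ℝ) < c / 2) h2
      have hL : Real.logb 2 nS < 0 := Real.logb_neg (by norm_num) hnS h3.2
      have hmul : nS * (Am nS / nS) = Am nS := by field_simp
      have hlogAm : Real.logb 2 (Am nS) = Real.logb 2 nS + Real.logb 2 (Am nS / nS) := by
        conv_lhs => rw [← hmul]
        rw [Real.logb_mul hnS.ne' hq.ne']
      rw [hlogAm]
      field_simp [hnS.ne', hL.ne]
    have h5 : Tendsto (fun nS => Real.logb 2 (Am nS / nS)) (nhdsWithin 0 (Set.Ioi 0))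
        (nhds (Real.logb 2 c)) := by
      have hcont : ContinuousAt (fun x : ℝ => Real.logb 2 x) c := by
        have := (Real.continuousAt_log hc0.ne').div_const (Real.log 2)
        simpa [Real.logb, div_eq_mul_inv] using this
      exact hcont.tendsto.comp hAmdiv
    have h6 : Tendsto (fun nS => (Am nS / nS) * (1 + Real.logb 2 (Am nS / nS) * (Real.logb 2 nS)⁻¹))
        (nhdsWithin 0 (Set.Ioi 0)) (nhds (c * (1 + Real.logb 2 c * 0))) :=
      hAmdiv.mul (tendsto_const_nhds.add (h5.mul logb_inv_tendsto))
    rw [show c * (1 + Real.logb 2 c * 0) = c by ring] at h6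
    exact h6.congr' heq2
  -- (C) define the smooth part S
  obtain ⟨S, hSdef⟩ : ∃ S : ℝ → ℝ, S = fun nS =>
      (1 + nS) * Real.logb 2 (1 + nS)
      + (1 + (η * nS + (1 - η) * nB)) * Real.logb 2 (1 + (η * nS + (1 - η) * nB))
      - (1 + Ap nS) * Real.logb 2 (1 + Ap nS)
      - (1 + Am nS) * Real.logb 2 (1 + Am nS)
      - (η * nS + (1 - η) * nB) * Real.logb 2 (η * nS + (1 - η) * nB)
      + Ap nS * Real.logb 2 (Ap nS) := ⟨_, rfl⟩
  have hkey : ∀ nS, CEA nS = S nS - nS * Real.logb 2 nS + Am nS * Real.logb 2 (Am nS) := by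
    intro nS
    rw [hCEA, hg, hg, hg, hg]
    simp only [hSdef]
    ring
  have hAp0 : Ap 0 = (1 - η) * nB := by rw [hAp, hB0, hbdef]; ring
  have hAm0 : Am 0 = 0 := by rw [hAm, hB0, hbdef]; ring
  have hS0 : S 0 = 0 := by
    simp only [hSdef, hAp0, hAm0]
    norm_num [Real.logb_one]
  -- differentiability of S at 0
  have hBdiff : DifferentiableAt ℝ B 0 := by
    rw [hBfun]
    exact DifferentiableAt.sqrt (by fun_prop) (by simpa using (hQpos 0 le_rfl).ne')
  have hApdiff : DifferentiableAt ℝ Ap 0 := by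
    rw [funext hAp]
    exact ((hBdiff.sub_const 1).add (((differentiableAt_const nB).sub differentiableAt_fun_id).const_mul (1 - η))).div_const 2
  have hAmdiff : DifferentiableAt ℝ Am 0 := by
    rw [funext hAm]
    exact ((hBdiff.sub_const 1).sub (((differentiableAt_const nB).sub differentiableAt_fun_id).const_mul (1 - η))).div_const 2
  have hcomp : ∀ (f : ℝ → ℝ), DifferentiableAt ℝ f 0 → f 0 ≠ 0 →
      DifferentiableAt ℝ (fun nS => f nS * Real.logb 2 (f nS)) 0 := by
    intro f hf h0
    exact (xlogb_diff h0).comp 0 hf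
  have hSdiff : DifferentiableAt ℝ S 0 := by
    rw [hSdef]
    clear hSdef hkey hS0
    have d1 := hcomp (fun nS => 1 + nS) (by fun_prop) (by norm_num)
    have d2 := hcomp (fun nS => 1 + (η * nS + (1 - η) * nB)) (by fun_prop)
      (by show (1:ℝ) + (η * 0 + (1 - η) * nB) ≠ 0; nlinarith [hmB])
    have d3 := hcomp (fun nS => 1 + Ap nS) ((differentiableAt_const 1).add hApdiff)
      (by show (1:ℝ) + Ap 0 ≠ 0; rw [hAp0]; nlinarith [hmB])
    have d4 := hcomp (fun nS => 1 + Am nS) ((differentiableAt_const 1).add hAmdiff)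
      (by show (1:ℝ) + Am 0 ≠ 0; rw [hAm0]; norm_num)
    have d5 := hcomp (fun nS => η * nS + (1 - η) * nB) (by fun_prop)
      (by show η * 0 + (1 - η) * nB ≠ 0; nlinarith [hmB])
    have d6 := hcomp Ap hApdiff (by rw [hAp0]; exact hmB.ne')
    exact ((((d1.add d2).sub d3).sub d4).sub d5).add d6
  have hslope : Tendsto (fun nS => S nS / nS) (nhdsWithin 0 (Set.Ioi 0)) (nhds (deriv S 0)) := by
    have h := hasDerivAt_iff_tendsto_slope.mp hSdiff.hasDerivAt
    have h2 : Tendsto (slope S 0) (nhdsWithin 0 (Set.Ioi 0)) (nhds (deriv S 0)) :=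
      h.mono_left (nhdsWithin_mono 0 (fun x hx => ne_of_gt hx))
    apply h2.congr'
    filter_upwards [self_mem_nhdsWithin] with nS hnS
    rw [slope_def_field, hS0]
    ring
  have hT1 : Tendsto (fun nS => S nS * (-(nS * Real.logb 2 nS))⁻¹)
      (nhdsWithin 0 (Set.Ioi 0)) (nhds 0) := by
    have heq3 : ∀ nS : ℝ, (S nS / nS) * (-(Real.logb 2 nS)⁻¹) = S nS * (-(nS * Real.logb 2 nS))⁻¹ := by
      intro nS; rw [inv_neg, mul_inv]; ring
    have h4 : Tendsto (fun nS => (S nS / nS) * (-(Real.logb 2 nS)⁻¹))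
        (nhdsWithin 0 (Set.Ioi 0)) (nhds (deriv S 0 * -0)) := hslope.mul logb_inv_tendsto.neg
    rw [show deriv S 0 * -0 = 0 by ring] at h4
    exact h4.congr heq3
  -- assembly
  have hkeyev : ∀ᶠ nS in nhdsWithin 0 (Set.Ioi 0),
      S nS * (-(nS * Real.logb 2 nS))⁻¹ + 1 - Am nS * Real.logb 2 (Am nS) / (nS * Real.logb 2 nS)
        = CEA nS / (-(nS * Real.logb 2 nS)) := by
    filter_upwards [self_mem_nhdsWithin,
      Ioo_mem_nhdsGT_of_mem (by norm_num : (0:ℝ) ∈ Set.Ico (0:ℝ) 1)] with nS h1 h2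
    have hnS : (0:ℝ) < nS := h1
    have hL : Real.logb 2 nS < 0 := Real.logb_neg (by norm_num) hnS h2.2
    rw [hkey nS]
    field_simp [hnS.ne', hL.ne]
    ring
  have hsum : Tendsto (fun nS =>
      S nS * (-(nS * Real.logb 2 nS))⁻¹ + 1 - Am nS * Real.logb 2 (Am nS) / (nS * Real.logb 2 nS))
      (nhdsWithin 0 (Set.Ioi 0)) (nhds (0 + 1 - c)) :=
    (hT1.add tendsto_const_nhds).sub hT3
  have hval : (0:ℝ) + 1 - c = η / (1 + (1 - η) * nB) := by rw [hcdef, hbdef]; ring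
  rw [hval] at hsum
  exact hsum.congr' hkeyev
end

section
/- Let n̄_T > 0 and τ_k = n̄_T^k/(1+n̄_T)^{k+1} for k ≥ 0. Then Σ_{k≥0} (k+1)·τ_{k+1}·ln(τ_k) = 2·n̄_T²·ln(n̄_T) − 2·n̄_T²·ln(1+n̄_T) − n̄_T·ln(1+n̄_T). -/
theorem stmt_7 (nT : ℝ) (hnT : 0 < nT)
    (τ : ℕ → ℝ) (hτ : ∀ k, τ k = nT ^ k / (1 + nT) ^ (k + 1)) :
    ∑' k : ℕ, ((k : ℝ) + 1) * τ (k + 1) * Real.log (τ k) =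
      2 * nT ^ 2 * Real.log nT - 2 * nT ^ 2 * Real.log (1 + nT) - nT * Real.log (1 + nT) := by
  have h1n : (0:ℝ) < 1 + nT := by linarith
  have h1n' : (1 + nT) ≠ 0 := ne_of_gt h1n
  set r : ℝ := nT / (1 + nT) with hr
  have hr0 : 0 < r := div_pos hnT h1n
  have hr1 : r < 1 := (div_lt_one h1n).2 (by linarith)
  have hrn : ‖r‖ < 1 := by rw [Real.norm_eq_abs, abs_of_pos hr0]; exact hr1
  have h1r : 1 - r = 1 / (1 + nT) := by rw [hr]; field_simp; ring
  set L1 := Real.log nT with hL1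
  set L2 := Real.log (1 + nT) with hL2
  set c : ℝ := nT / (1 + nT) ^ 2 with hc
  -- log of τ k
  have hlog : ∀ k : ℕ, Real.log (τ k) = k * L1 - (k + 1) * L2 := by
    intro k
    rw [hτ k, Real.log_div (by positivity) (by positivity), Real.log_pow, Real.log_pow]
    push_cast; ring
  have hA : HasSum (fun n : ℕ => ((n + 2).choose 2 : ℝ) * r ^ n) (1 / (1 - r) ^ 3) :=
    hasSum_choose_mul_geometric_of_norm_lt_one 2 hrn
  have hB : HasSum (fun n : ℕ => ((n + 1).choose 1 : ℝ) * r ^ n) (1 / (1 - r) ^ 2) :=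
    hasSum_choose_mul_geometric_of_norm_lt_one 1 hrn
  set a : ℝ := c * (2 * L1 - 2 * L2) with ha
  set b : ℝ := c * (-2 * L1 + L2) with hb
  have hsum : HasSum (fun k : ℕ => ((k : ℝ) + 1) * τ (k + 1) * Real.log (τ k))
      (a * (1 / (1 - r) ^ 3) + b * (1 / (1 - r) ^ 2)) := by
    have := (hA.mul_left a).add (hB.mul_left b)
    convert this using 2 with k
    · rfl
    rw [hτ (k + 1), hlog k]
    have hch2 : ((k + 2).choose 2 : ℝ) = ((k:ℝ) + 2) * ((k:ℝ) + 1) / 2 := by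
      rw [Nat.cast_choose_two]; push_cast; ring
    have hch1 : ((k + 1).choose 1 : ℝ) = (k:ℝ) + 1 := by simp
    have hpow : nT ^ (k + 1) / (1 + nT) ^ (k + 1 + 1) = c * r ^ k := by
      rw [hc, hr, div_pow, pow_succ, pow_succ, pow_succ]
      field_simp
    rw [hpow, hch2, hch1, ha, hb]
    ring
  rw [hsum.tsum_eq, h1r]
  have : (1:ℝ) / (1 / (1 + nT)) ^ 3 = (1 + nT) ^ 3 := by field_simp
  rw [this]
  have : (1:ℝ) / (1 / (1 + nT)) ^ 2 = (1 + nT) ^ 2 := by field_simp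
  rw [this, ha, hb, hc]
  field_simp
  ring
end

section
/- Let w₁₁, w₂₂ > 1/2, w₁₂ ∈ ℝ with (w₁₁+w₂₂)² > 4w₁₂², and define w = √(w₁₁ − 2w₁₂ + w₂₂)/((w₁₁+w₂₂)² − 4w₁₂²)^{1/4} (assuming w₁₁ − 2w₁₂ + w₂₂ > 0), s_± = (w ± 1/w)/2, λ₁,λ₂ as before, and the 4×4 matrix S = [[s₊, s₋, 0, 0],[−s₋, −s₊, 0, 0],[0,0,s₊,−s₋],[0,0,s₋,−s₊]]. Then S is symplectic with respect to Ω = [[0,I₂],[−I₂,0]] (i.e., S·Ω·Sᵀ = Ω) and S·diag(λ₁,λ₂,λ₁,λ₂)·Sᵀ = [[w₁₁,w₁₂,0,0],[w₁₂,w₂₂,0,0],[0,0,w₁₁,−w₁₂],[0,0,−w₁₂,w₂₂]]. -/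
set_option maxHeartbeats 1000000 in
theorem stmt_13 (w11 w22 w12 : ℝ) (h11 : 1 / 2 < w11) (h22 : 1 / 2 < w22)
    (hpos : 4 * w12 ^ 2 < (w11 + w22) ^ 2)
    (hw : 0 < w11 - 2 * w12 + w22)
    (w sp sm lam1 lam2 : ℝ)
    (hwdef : w = Real.sqrt (w11 - 2 * w12 + w22) / ((w11 + w22) ^ 2 - 4 * w12 ^ 2) ^ ((1:ℝ)/4))
    (hsp : sp = (w + 1 / w) / 2) (hsm : sm = (w - 1 / w) / 2)
    (hlam1 : lam1 = (Real.sqrt ((w11 + w22) ^ 2 - 4 * w12 ^ 2) + (w11 - w22)) / 2)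
    (hlam2 : lam2 = (Real.sqrt ((w11 + w22) ^ 2 - 4 * w12 ^ 2) - (w11 - w22)) / 2)
    (S Ω D Sig : Matrix (Fin 4) (Fin 4) ℝ)
    (hS : S = !![sp, sm, 0, 0; -sm, -sp, 0, 0; 0, 0, sp, -sm; 0, 0, sm, -sp])
    (hΩ : Ω = !![0, 0, 1, 0; 0, 0, 0, 1; -1, 0, 0, 0; 0, -1, 0, 0])
    (hD : D = !![lam1, 0, 0, 0; 0, lam2, 0, 0; 0, 0, lam1, 0; 0, 0, 0, lam2])
    (hSig : Sig = !![w11, w12, 0, 0; w12, w22, 0, 0; 0, 0, w11, -w12; 0, 0, -w12, w22]) :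
    S * Ω * S.transpose = Ω ∧ S * D * S.transpose = Sig := by
  set A : ℝ := (w11 + w22) ^ 2 - 4 * w12 ^ 2 with hAdef
  have hA : 0 < A := by rw [hAdef]; linarith
  set a : ℝ := Real.sqrt A with hadef
  have ha : 0 < a := Real.sqrt_pos.mpr hA
  have ha2 : a ^ 2 = A := Real.sq_sqrt hA.le
  set B : ℝ := w11 - 2 * w12 + w22 with hBdef
  have hr : (0:ℝ) < A ^ ((1:ℝ)/4) := Real.rpow_pos_of_pos hA _
  have hr2 : (A ^ ((1:ℝ)/4)) ^ 2 = a := by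
    rw [hadef, Real.sqrt_eq_rpow, ← Real.rpow_natCast (A ^ ((1:ℝ)/4)) 2,
      ← Real.rpow_mul hA.le]
    norm_num
  have hw0 : 0 < w := by
    rw [hwdef]
    exact div_pos (Real.sqrt_pos.mpr hw) hr
  have hwne : w ≠ 0 := hw0.ne'
  have hws : a * w ^ 2 = B := by
    rw [hwdef, div_pow, Real.sq_sqrt hw.le, hr2]
    field_simp
  have hac : a = w ^ 2 * (w11 + 2 * w12 + w22) := by
    have hBC : a * a = B * (w11 + 2 * w12 + w22) := by
      rw [show a * a = a ^ 2 by ring, ha2, hAdef, hBdef]; ring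
    have key : a * a = a * (w ^ 2 * (w11 + 2 * w12 + w22)) := by
      rw [hBC, ← hws]; ring
    exact mul_left_cancel₀ ha.ne' key
  have hws' : a * w ^ 2 = w11 - 2 * w12 + w22 := hws.trans hBdef
  -- key scalar identities
  have h1 : sp ^ 2 - sm ^ 2 = 1 := by
    rw [hsp, hsm]; field_simp; ring
  have h2 : sp ^ 2 * lam1 + sm ^ 2 * lam2 = w11 := by
    rw [hsp, hsm, hlam1, hlam2]
    field_simp
    linear_combination (2 * w ^ 2) * hws' + 2 * hac
  have h3 : sm ^ 2 * lam1 + sp ^ 2 * lam2 = w22 := by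
    rw [hsp, hsm, hlam1, hlam2]
    field_simp
    linear_combination (2 * w ^ 2) * hws' + 2 * hac
  have h4 : sp * sm * (lam1 + lam2) = -w12 := by
    rw [hsp, hsm, hlam1, hlam2]
    field_simp
    linear_combination 2 * w ^ 2 * hws' - 2 * hac
  subst hS hΩ hD hSig
  have hT : (!![sp, sm, 0, 0; -sm, -sp, 0, 0; 0, 0, sp, -sm; 0, 0, sm, -sp]).transpose
      = !![sp, -sm, 0, 0; sm, -sp, 0, 0; 0, 0, sp, sm; 0, 0, -sm, -sp] := by
    ext i j; fin_cases i <;> fin_cases j <;> rfl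
  rw [hT]
  constructor <;>
  · ext i j
    fin_cases i <;> fin_cases j <;>
      simp [Matrix.mul_apply, Fin.sum_univ_four, Matrix.vecHead, Matrix.vecTail] <;>
      first
        | ring1
        | linear_combination h1
        | linear_combination -h1
        | linear_combination h2
        | linear_combination h3
        | linear_combination h4
        | linear_combination -h4
end

section
/- Let n̄_T > 0 and for u ∈ ℝ define the sum S₂(u) as the evaluation of d²S(ρ̄)/du² at u = 0, given by Tr[−(2/n̄_T²)·(â ρ_{n̄_T} â†)·log₂ ρ_{n̄_T} + (2/n̄_T)·ρ_{n̄_T}·log₂ ρ_{n̄_T}], where ρ_{n̄_T} = Σ_k τ_k |k⟩⟨k| with τ_k = n̄_T^k/(1+n̄_T)^{k+1} and â|k⟩ = √k|k−1⟩. Expressed as series: S₂ = −(2/n̄_T²)·Σ_k (k+1)·τ_{k+1}·log₂ τ_k + (2/n̄_T)·Σ_k τ_k·log₂ τ_k. Then S₂ = 2·log₂(1 + 1/n̄_T). -/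
theorem stmt_16 (nT : ℝ) (hnT : 0 < nT)
    (τ : ℕ → ℝ) (hτ : ∀ k, τ k = nT ^ k / (1 + nT) ^ (k + 1)) :
    -(2 / nT ^ 2) * ∑' k : ℕ, ((k : ℝ) + 1) * τ (k + 1) * Real.logb 2 (τ k)
      + (2 / nT) * ∑' k : ℕ, τ k * Real.logb 2 (τ k)
      = 2 * Real.logb 2 (1 + 1 / nT) := by
  have h1nT : (0:ℝ) < 1 + nT := by linarith
  have h1nT' : (1 + nT) ≠ 0 := ne_of_gt h1nT
  have hnT' : nT ≠ 0 := ne_of_gt hnT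
  set q : ℝ := nT / (1 + nT) with hq
  have hq0 : 0 < q := div_pos hnT h1nT
  have hq1 : q < 1 := (div_lt_one h1nT).2 (by linarith)
  have hqn : ‖q‖ < 1 := by rw [Real.norm_eq_abs, abs_of_pos hq0]; exact hq1
  have h1q : (1 - q) ≠ 0 := by linarith
  set A : ℝ := Real.logb 2 nT - Real.logb 2 (1 + nT) with hA
  set B : ℝ := Real.logb 2 (1 + nT) with hB
  have hlog : ∀ k : ℕ, Real.logb 2 (τ k) = k * A - B := by
    intro k
    rw [hτ k, Real.logb_div (pow_ne_zero _ hnT') (pow_ne_zero _ h1nT'),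
      Real.logb_pow, Real.logb_pow]
    push_cast
    ring
  have hτq : ∀ k : ℕ, τ k = (1 - q) * q ^ k := by
    intro k
    rw [hτ k, hq, div_pow]
    field_simp
    ring
  -- basic geometric sums
  have h0 : HasSum (fun n : ℕ => q ^ n) (1 / (1 - q)) := by
    simpa using hasSum_geometric_of_norm_lt_one hqn
  have h1 : HasSum (fun n : ℕ => (n : ℝ) * q ^ n) (q / (1 - q) ^ 2) :=
    hasSum_coe_mul_geometric_of_norm_lt_one hqn
  have h2c : HasSum (fun n : ℕ => ((n + 2).choose 2 : ℝ) * q ^ n) (1 / (1 - q) ^ 3) :=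
    hasSum_choose_mul_geometric_of_norm_lt_one 2 hqn
  have h2 : HasSum (fun n : ℕ => (n : ℝ) ^ 2 * q ^ n) (q * (1 + q) / (1 - q) ^ 3) := by
    have h := ((h2c.mul_left 2).sub (h1.mul_left 3)).sub (h0.mul_left 2)
    convert h using 1
    · rfl
    · funext n
      have hc : ((n + 2).choose 2 : ℝ) = ((n : ℝ) + 2) * (((n : ℝ) + 2) - 1) / 2 := by
        rw [show ((n+2).choose 2 : ℝ) = (((n+2 : ℕ)).choose 2 : ℝ) by norm_cast,
          Nat.cast_choose_two]
        push_cast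
        ring
      rw [hc]
      ring
    · field_simp
      ring
  -- the two series
  have hs2 : HasSum (fun k : ℕ => τ k * Real.logb 2 (τ k)) (A * nT - B) := by
    have h := (h1.mul_left ((1 - q) * A)).sub (h0.mul_left ((1 - q) * B))
    convert h using 1
    · rfl
    · funext k
      rw [hlog k, hτq k]
      ring
    · simp only [hq]
      field_simp
      ring
  have hs1 : HasSum (fun k : ℕ => ((k : ℝ) + 1) * τ (k + 1) * Real.logb 2 (τ k))
      ((1 - q) * q * (A * (q * (1 + q) / (1 - q) ^ 3) + (A - B) * (q / (1 - q) ^ 2)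
        - B * (1 / (1 - q)))) := by
    have h := ((h2.mul_left ((1 - q) * q * A)).add
      (h1.mul_left ((1 - q) * q * (A - B)))).sub (h0.mul_left ((1 - q) * q * B))
    convert h using 1
    · rfl
    · funext k
      rw [hlog k, hτq (k + 1)]
      ring
    · ring
  rw [hs1.tsum_eq, hs2.tsum_eq]
  have hfin : Real.logb 2 (1 + 1 / nT) = -A := by
    rw [hA, show (1 : ℝ) + 1 / nT = (1 + nT) / nT by field_simp; ring,
      Real.logb_div h1nT' hnT']
    ring
  rw [hfin]
  simp only [hq]
  field_simp
  ring
end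

section
/- Fix η ∈ (0,1), n̄_B > 0, δ > 0, ε_n ∈ [0,1) with ε_n → 0, and c_cov = √(2η·n̄_B(1+η·n̄_B))/(1−η). Suppose the sequence M_n ≥ 0 satisfies M_n·(1−ε_n) − 1 ≤ n·C_χ(√δ·c_cov/√n) for all n, where C_χ(x) = g(η·x + (1−η)·n̄_B) − g((1−η)·n̄_B) and g(x) = (1+x)log₂(1+x) − x·log₂x. Then limsup_{n→∞} M_n/√(δ·n) ≤ c_cov·η·log₂(1 + 1/((1−η)·n̄_B)). -/
open Real Filter

lemma key_concave (a : ℝ) (ha : 0 < a) (h : ℝ) (hh : 0 ≤ h) :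
    (1+(a+h))*Real.log (1+(a+h)) - (a+h)*Real.log (a+h)
      - ((1+a)*Real.log (1+a) - a*Real.log a)
      ≤ h*(Real.log (1+a) - Real.log a) := by
  set K := Real.log (1+a) - Real.log a with hK
  set F : ℝ → ℝ := fun x => (1+x)*Real.log (1+x) - x*Real.log x - x*K with hF
  have hder : ∀ x : ℝ, 0 < x →
      HasDerivAt F (Real.log (1+x) - Real.log x - K) x := by
    intro x hx
    have h1x : (1:ℝ) + x ≠ 0 := by linarith
    have hA : HasDerivAt (fun x : ℝ => 1 + x) 1 x := by
      simpa using (hasDerivAt_id x).const_add 1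
    have hB : HasDerivAt (fun x : ℝ => Real.log (1+x)) (1/(1+x)) x := by
      simpa [Function.comp_def] using (Real.hasDerivAt_log h1x).comp x hA
    have hd1 : HasDerivAt (fun x : ℝ => (1+x)*Real.log (1+x))
        (Real.log (1+x) + 1) x := by
      have := hA.fun_mul hB
      have hcancel : (1+x)*(1+x)⁻¹ = 1 := mul_inv_cancel₀ h1x
      simpa [hcancel] using this
    have hd2 : HasDerivAt (fun x : ℝ => x*Real.log x) (Real.log x + 1) x := by
      have := (hasDerivAt_id x).fun_mul (Real.hasDerivAt_log hx.ne')
      have hcancel : x*x⁻¹ = 1 := mul_inv_cancel₀ hx.ne'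
      simpa [hcancel, mul_comm] using this
    have hd3 : HasDerivAt (fun x : ℝ => x*K) K x := by
      simpa using (hasDerivAt_id x).mul_const K
    have := (hd1.fun_sub hd2).fun_sub hd3
    refine this.congr_deriv ?_
    ring
  have hant : AntitoneOn F (Set.Ici a) := by
    apply antitoneOn_of_deriv_nonpos (convex_Ici a)
    · intro x hx
      exact (hder x (lt_of_lt_of_le ha hx)).continuousAt.continuousWithinAt
    · intro x hx
      rw [interior_Ici] at hx
      exact (hder x (ha.trans hx)).differentiableAt.differentiableWithinAt
    · intro x hx
      rw [interior_Ici] at hx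
      have hxa : a < x := hx
      have hx0 : 0 < x := ha.trans hxa
      rw [(hder x hx0).deriv]
      have : Real.log (1+x) - Real.log x ≤ K := by
        rw [hK]
        have h1 : Real.log (1+x) + Real.log a ≤ Real.log (1+a) + Real.log x := by
          rw [← Real.log_mul (by linarith) ha.ne', ← Real.log_mul (by linarith) hx0.ne']
          apply Real.log_le_log (by positivity)
          nlinarith
        linarith
      linarith
  have hmem1 : a ∈ Set.Ici a := Set.self_mem_Ici
  have hmem2 : a + h ∈ Set.Ici a := by simp [hh]
  have := hant hmem1 hmem2 (by linarith)
  simp only [hF] at this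
  linarith

theorem stmt_18 (η nB δ : ℝ) (hη : η ∈ Set.Ioo (0:ℝ) 1) (hnB : 0 < nB) (hδ : 0 < δ)
    (ccov : ℝ) (hccov : ccov = Real.sqrt (2 * η * nB * (1 + η * nB)) / (1 - η))
    (g : ℝ → ℝ) (hg : ∀ x, g x = (1 + x) * Real.logb 2 (1 + x) - x * Real.logb 2 x)
    (Cχ : ℝ → ℝ) (hCχ : ∀ x, Cχ x = g (η * x + (1 - η) * nB) - g ((1 - η) * nB))
    (ε : ℕ → ℝ) (hε0 : ∀ n, ε n ∈ Set.Ico (0:ℝ) 1)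
    (hεlim : Filter.Tendsto ε Filter.atTop (nhds 0))
    (M : ℕ → ℝ) (hM0 : ∀ n, 0 ≤ M n)
    (hMn : ∀ n : ℕ, M n * (1 - ε n) - 1 ≤ (n : ℝ) * Cχ (Real.sqrt δ * ccov / Real.sqrt n)) :
    Filter.limsup (fun n : ℕ => M n / Real.sqrt (δ * n)) Filter.atTop ≤
      ccov * η * Real.logb 2 (1 + 1 / ((1 - η) * nB)) := by
  obtain ⟨hη0, hη1⟩ := hη
  have h1η : 0 < 1 - η := by linarith
  set a : ℝ := (1 - η) * nB with ha_def
  have ha : 0 < a := mul_pos h1η hnB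
  set L : ℝ := Real.logb 2 (1 + 1 / a) with hL_def
  have hlog2 : (0:ℝ) < Real.log 2 := Real.log_pos one_lt_two
  have hLlog : L = (Real.log (1 + a) - Real.log a) / Real.log 2 := by
    have h1 : (1:ℝ) + 1 / a = (1 + a) / a := by field_simp; ring
    rw [hL_def, h1, Real.logb, Real.log_div (by positivity) ha.ne']
  have hL0 : 0 ≤ L := by
    rw [hLlog]
    apply div_nonneg _ hlog2.le
    have : Real.log a ≤ Real.log (1 + a) := Real.log_le_log ha (by linarith)
    linarith
  have hccov0 : 0 ≤ ccov := by
    rw [hccov]; exact div_nonneg (Real.sqrt_nonneg _) h1η.le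
  -- the Holevo-capacity bound  Cχ x ≤ η x L
  have hCle : ∀ x : ℝ, 0 ≤ x → Cχ x ≤ η * x * L := by
    intro x hx
    have hh : 0 ≤ η * x := by positivity
    have hkey := key_concave a ha (η * x) hh
    rw [hCχ, hg, hg, hLlog]
    have e1 : η * x + a = a + η * x := by ring
    rw [e1]
    have expand : ∀ t : ℝ, 0 < t →
        (1 + t) * Real.logb 2 (1 + t) - t * Real.logb 2 t
          = ((1 + t) * Real.log (1 + t) - t * Real.log t) / Real.log 2 := by
      intro t ht
      rw [Real.logb, Real.logb]; ring
    rw [expand a ha, expand (a + η * x) (by linarith)]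
    rw [div_sub_div_same]
    have e2 : η * x * ((Real.log (1 + a) - Real.log a) / Real.log 2)
        = (η * x * (Real.log (1 + a) - Real.log a)) / Real.log 2 := by ring
    rw [e2]
    exact div_le_div_of_nonneg_right hkey hlog2.le
  set c : ℝ := ccov * η * L with hc_def
  set f : ℕ → ℝ := fun n => ((Real.sqrt (δ * n))⁻¹ + c) / (1 - ε n) with hf_def
  -- eventual bound
  have hev : ∀ᶠ n in Filter.atTop, M n / Real.sqrt (δ * n) ≤ f n := by
    filter_upwards [Filter.eventually_ge_atTop 1] with n hn
    have hn1 : (1:ℝ) ≤ (n:ℝ) := by exact_mod_cast hn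
    have hsn : 0 < Real.sqrt n := Real.sqrt_pos.mpr (by linarith)
    have hS : 0 < Real.sqrt (δ * n) := Real.sqrt_pos.mpr (by positivity)
    have hεn := hε0 n
    have hden : 0 < 1 - ε n := by linarith [hεn.2]
    set x := Real.sqrt δ * ccov / Real.sqrt n with hx_def
    have hx0 : 0 ≤ x := by positivity
    have hC := hCle x hx0
    have hdivsq : (n:ℝ) / Real.sqrt n = Real.sqrt n := by
      rw [div_eq_iff hsn.ne']
      exact (Real.mul_self_sqrt (by positivity : (0:ℝ) ≤ (n:ℝ))).symm
    have hmul : (n:ℝ) * (η * x * L) = c * Real.sqrt (δ * n) := by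
      rw [hx_def, hc_def, Real.sqrt_mul hδ.le]
      rw [show (n:ℝ) * (η * (Real.sqrt δ * ccov / Real.sqrt n) * L)
          = (η * (Real.sqrt δ * ccov) * L) * ((n:ℝ) / Real.sqrt n) by ring, hdivsq]
      ring
    have h1 : M n * (1 - ε n) ≤ 1 + c * Real.sqrt (δ * n) := by
      have h2 := hMn n
      have h3 : (n:ℝ) * Cχ x ≤ (n:ℝ) * (η * x * L) :=
        mul_le_mul_of_nonneg_left hC (by positivity)
      rw [hmul] at h3
      linarith
    have h4 : M n ≤ (1 + c * Real.sqrt (δ * n)) / (1 - ε n) :=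
      (le_div_iff₀ hden).mpr h1
    have h5 : M n / Real.sqrt (δ * n)
        ≤ ((1 + c * Real.sqrt (δ * n)) / (1 - ε n)) / Real.sqrt (δ * n) :=
      (div_le_div_iff_of_pos_right hS).mpr h4
    refine h5.trans_eq ?_
    simp only [hf_def]
    rw [div_div, mul_comm (1 - ε n), ← div_div]
    congr 1
    rw [add_div, one_div, mul_div_assoc, div_self hS.ne', mul_one]
  -- limit of f
  have h1 : Filter.Tendsto (fun n : ℕ => δ * (n:ℝ)) Filter.atTop Filter.atTop :=
    Filter.Tendsto.const_mul_atTop hδ tendsto_natCast_atTop_atTop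
  have hSinf : Filter.Tendsto (fun n : ℕ => Real.sqrt (δ * n)) Filter.atTop Filter.atTop := by
    rw [Filter.tendsto_atTop]
    intro b
    filter_upwards [h1.eventually_ge_atTop (b ^ 2)] with n hn
    calc b ≤ |b| := le_abs_self b
      _ = Real.sqrt (b ^ 2) := (Real.sqrt_sq_eq_abs b).symm
      _ ≤ Real.sqrt (δ * n) := Real.sqrt_le_sqrt hn
  have hinv : Filter.Tendsto (fun n : ℕ => (Real.sqrt (δ * n))⁻¹)
      Filter.atTop (nhds 0) := hSinf.inv_tendsto_atTop
  have hf : Filter.Tendsto f Filter.atTop (nhds c) := by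
    have hadd : Filter.Tendsto (fun n : ℕ => (Real.sqrt (δ * n))⁻¹ + c)
        Filter.atTop (nhds (0 + c)) := hinv.add tendsto_const_nhds
    have hden : Filter.Tendsto (fun n : ℕ => 1 - ε n) Filter.atTop (nhds (1 - 0)) :=
      tendsto_const_nhds.sub hεlim
    have h := hadd.div hden (by norm_num : (1:ℝ) - 0 ≠ 0)
    rw [show (0 + c) / ((1:ℝ) - 0) = c by norm_num] at h
    exact h
  refine le_trans (Filter.limsup_le_limsup hev ?_ ?_) (le_of_eq hf.limsup_eq)
  · exact Filter.isCoboundedUnder_le_of_le Filter.atTop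
      (fun n => div_nonneg (hM0 n) (Real.sqrt_nonneg _))
  · exact hf.isBoundedUnder_le
end
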